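/- For all ξ, η ∈ C_c²((0,∞)), the coefficient function (b,a) ↦ (ξ *₊ η)(b,a) is integrable on ℝ × (0,∞) with respect to the measure a⁻² db da; that is, ∫₀^∞ ∫_ℝ |(ξ *₊ η)(b,a)| db a⁻² da < ∞. The same holds for ξ *₋ η. -/

import Mathlib

open MeasureTheory Set

/-- Coefficient function of the representation `π₊` of the real `ax+b` group:
`(ξ *₊ η)(b,a) = ∫₀^∞ e^{-2πibt} ξ(at) conj(η(t)) t⁻¹ dt`. -/
noncomputable def coeffP (ξ η : ℝ → ℂ) (b a : ℝ) : ℂ :=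
  ∫ t in Ioi (0 : ℝ),
    Complex.exp (-(2 * Real.pi * b * t : ℝ) * Complex.I) * ξ (a * t)
      * starRingEnd ℂ (η t) * (t : ℂ)⁻¹

/-- Coefficient function of the representation `π₋` of the real `ax+b` group:
`(ξ *₋ η)(b,a) = ∫₀^∞ e^{2πibt} ξ(at) conj(η(t)) t⁻¹ dt`. -/
noncomputable def coeffM (ξ η : ℝ → ℂ) (b a : ℝ) : ℂ :=
  ∫ t in Ioi (0 : ℝ),
    Complex.exp ((2 * Real.pi * b * t : ℝ) * Complex.I) * ξ (a * t)
      * starRingEnd ℂ (η t) * (t : ℂ)⁻¹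

/-- `C_c²((0,∞))`: twice continuously differentiable complex-valued functions on `ℝ`
with compact support contained in `(0,∞)`. -/
def CcTwo (f : ℝ → ℂ) : Prop :=
  ContDiff ℝ 2 f ∧ HasCompactSupport f ∧ tsupport f ⊆ Ioi (0 : ℝ)

/-- Left Haar measure `a⁻² db da` of the `ax+b` group, modelled on `ℝ × (0,∞)`
(first coordinate `b`, second coordinate `a`). -/
noncomputable def muG : Measure (ℝ × ℝ) :=
  (((volume : Measure ℝ).prod ((volume : Measure ℝ).restrict (Ioi (0 : ℝ)))).withDensity
    fun p => ENNReal.ofReal ((p.2 ^ 2)⁻¹))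



lemma exists_norm_bound (f : ℝ → ℂ) (hc : Continuous f) (hs : HasCompactSupport f) :
    ∃ C : ℝ, 0 ≤ C ∧ ∀ x, ‖f x‖ ≤ C := by
  have hsn : HasCompactSupport fun x => ‖f x‖ := hs.comp_left (g := norm) norm_zero
  obtain ⟨x₀, hx₀⟩ := hc.norm.exists_forall_ge_of_hasCompactSupport hsn
  exact ⟨‖f x₀‖, norm_nonneg _, hx₀⟩

lemma ccTwo_g {η : ℝ → ℂ} (hη : CcTwo η) :
    CcTwo (fun t : ℝ => starRingEnd ℂ (η t) * (t : ℂ)⁻¹) := by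
  obtain ⟨hsm, hcs, hsupp⟩ := hη
  have hsub : Function.support (fun t : ℝ => starRingEnd ℂ (η t) * (t : ℂ)⁻¹)
      ⊆ Function.support η := by
    intro x hx
    simp only [Function.mem_support] at hx ⊢
    intro h; apply hx; simp [h]
  refine ⟨?_, hcs.mono hsub, ?_⟩
  · rw [contDiff_iff_contDiffAt]
    intro t
    by_cases ht : t ∈ tsupport η
    · have ht0 : (0:ℝ) < t := hsupp ht
      have hconj : ContDiff ℝ 2 (fun t => starRingEnd ℂ (η t)) :=
        Complex.conjCLE.toContinuousLinearMap.contDiff.comp hsm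
      exact hconj.contDiffAt.mul
        ((Complex.ofRealCLM.contDiff.contDiffAt (n := 2)).inv
          (by simpa using Complex.ofReal_ne_zero.mpr ht0.ne'))
    · have h0 : (fun t : ℝ => starRingEnd ℂ (η t) * (t:ℂ)⁻¹) =ᶠ[nhds t] 0 := by
        filter_upwards [notMem_tsupport_iff_eventuallyEq.1 ht] with x hx
        simp [hx]
      exact (contDiffAt_const (c := (0:ℂ))).congr_of_eventuallyEq h0
  · exact (closure_mono hsub).trans hsupp

lemma iteratedDeriv_two (f : ℝ → ℂ) : iteratedDeriv 2 f = deriv (deriv f) := by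
  rw [show (2:ℕ) = 1+1 from rfl, iteratedDeriv_succ, iteratedDeriv_one]

lemma support_in_Icc (f : ℝ → ℂ) (hs : HasCompactSupport f) (hsub : tsupport f ⊆ Ioi 0) :
    ∃ ε R : ℝ, 0 < ε ∧ ε ≤ R ∧ tsupport f ⊆ Icc ε R := by
  rcases eq_empty_or_nonempty (tsupport f) with h | h
  · exact ⟨1, 1, one_pos, le_rfl, by rw [h]; exact empty_subset _⟩
  · obtain ⟨ε, hε⟩ := hs.exists_isLeast h
    obtain ⟨R, hR⟩ := hs.exists_isGreatest h
    exact ⟨ε, R, hsub hε.1, hε.2 hR.1, fun x hx => ⟨hε.2 hx, hR.2 hx⟩⟩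

lemma coeffM_eq (ξ η : ℝ → ℂ) (b a : ℝ) : coeffM ξ η b a = coeffP ξ η (-b) a := by
  simp only [coeffM, coeffP]
  refine setIntegral_congr_fun measurableSet_Ioi fun t _ => ?_
  have h : ((2*Real.pi*b*t :ℝ):ℂ) * Complex.I = -((2*Real.pi*(-b)*t :ℝ):ℂ) * Complex.I := by
    push_cast; ring
  rw [h]

lemma coeffP_eq_fourier (ξ η : ℝ → ℂ) (hη : tsupport η ⊆ Ioi 0) (b a : ℝ) :
    coeffP ξ η b a =
      FourierTransform.fourier
        (fun t : ℝ => ξ (a*t) * (starRingEnd ℂ (η t) * (t:ℂ)⁻¹)) b := by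
  rw [Real.fourier_real_eq_integral_exp_smul]
  rw [← setIntegral_eq_integral_of_forall_compl_eq_zero
    (s := Ioi (0:ℝ)) (fun t ht => ?_), coeffP]
  · refine setIntegral_congr_fun measurableSet_Ioi fun t _ => ?_
    rw [smul_eq_mul,
      show ((-2*Real.pi*t*b:ℝ):ℂ) * Complex.I = -((2*Real.pi*b*t:ℝ):ℂ) * Complex.I by
        push_cast; ring]
    ring
  · by_cases ht0 : t = 0
    · simp [ht0]
    · have : η t = 0 := image_eq_zero_of_notMem_tsupport (fun hmem => ht (hη hmem))
      simp [this]
lemma norm_fourier_le (f : ℝ → ℂ) (b : ℝ) :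
    ‖FourierTransform.fourier f b‖ ≤ ∫ t, ‖f t‖ :=
  VectorFourier.norm_fourierIntegral_le_integral_norm _ _ _ _ _

lemma integrable_iteratedDeriv (f : ℝ → ℂ) (hf : ContDiff ℝ 2 f)
    (hs : HasCompactSupport f) : ∀ n : ℕ, (n:ℕ∞) ≤ 2 → Integrable (iteratedDeriv n f) := by
  intro n hn
  have hn' : n ≤ 2 := by exact_mod_cast hn
  have hc : Continuous (iteratedDeriv n f) :=
    hf.continuous_iteratedDeriv n (by exact_mod_cast hn)
  have hcs : HasCompactSupport (iteratedDeriv n f) := by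
    interval_cases n
    · simpa [iteratedDeriv_zero] using hs
    · simpa [iteratedDeriv_one] using hs.deriv
    · rw [iteratedDeriv_two]; exact hs.deriv.deriv
  exact hc.integrable_of_hasCompactSupport hcs

lemma fourier_decay (f : ℝ → ℂ) (hf : ContDiff ℝ 2 f) (hs : HasCompactSupport f)
    (b : ℝ) (hb : b ≠ 0) :
    ‖FourierTransform.fourier f b‖ ≤ (∫ t, ‖iteratedDeriv 2 f t‖) / (2*Real.pi*b)^2 := by
  have key := Real.fourier_iteratedDeriv (f := f) (N := (2:ℕ∞)) (n := 2)
    (by exact_mod_cast hf) (integrable_iteratedDeriv f hf hs) le_rfl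
  have e1 : ‖FourierTransform.fourier (iteratedDeriv 2 f) b‖
      = (2*Real.pi*b)^2 * ‖FourierTransform.fourier f b‖ := by
    rw [key]
    rw [norm_smul]
    congr 1
    rw [norm_pow, norm_mul, norm_mul, norm_mul]
    simp [Complex.norm_real, Real.pi_pos.le, abs_of_nonneg]
    rw [mul_pow, mul_pow, sq_abs]
    ring
  have hpos : (0:ℝ) < (2*Real.pi*b)^2 := by positivity
  calc ‖FourierTransform.fourier f b‖ = ‖FourierTransform.fourier (iteratedDeriv 2 f) b‖ / (2*Real.pi*b)^2 := by
        rw [e1]; field_simp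
    _ ≤ (∫ t, ‖iteratedDeriv 2 f t‖) / (2*Real.pi*b)^2 := by
        gcongr
        exact norm_fourier_le _ _
lemma deriv_bound_aux
    (ξ g : ℝ → ℂ) (hξ : ContDiff ℝ 2 ξ) (hg : ContDiff ℝ 2 g) (hgs : HasCompactSupport g)
    (C0 C1 C2 : ℝ) (hb0 : ∀ x, ‖ξ x‖ ≤ C0) (hb1 : ∀ x, ‖deriv ξ x‖ ≤ C1)
    (hb2 : ∀ x, ‖deriv (deriv ξ) x‖ ≤ C2) (hC0 : 0 ≤ C0) (hC1 : 0 ≤ C1) (hC2 : 0 ≤ C2)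
    (a A : ℝ) (ha : 0 ≤ a) (haA : a ≤ A) :
    ∫ t, ‖iteratedDeriv 2 (fun t => ξ (a*t) * g t) t‖
      ≤ A^2 * C2 * (∫ t, ‖g t‖) + 2*A*C1 * (∫ t, ‖deriv g t‖)
        + C0 * (∫ t, ‖deriv (deriv g) t‖) := by
  have hA : 0 ≤ A := ha.trans haA
  have hξd : Differentiable ℝ ξ := hξ.differentiable two_ne_zero
  have hξ' : ContDiff ℝ 1 (deriv ξ) := by
    have h2 : ContDiff ℝ (1+1 : ℕ) ξ := by exact_mod_cast hξ
    exact (contDiff_succ_iff_deriv.1 h2).2.2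
  have hξ'd : Differentiable ℝ (deriv ξ) := hξ'.differentiable one_ne_zero
  have hgd : Differentiable ℝ g := hg.differentiable two_ne_zero
  have hg' : ContDiff ℝ 1 (deriv g) := by
    have h2 : ContDiff ℝ (1+1 : ℕ) g := by exact_mod_cast hg
    exact (contDiff_succ_iff_deriv.1 h2).2.2
  have hg'd : Differentiable ℝ (deriv g) := hg'.differentiable one_ne_zero
  have mul_t : ∀ t : ℝ, HasDerivAt (fun t : ℝ => a*t) a t := by
    intro t; simpa using (hasDerivAt_id t).const_mul a
  have hu : ∀ t, HasDerivAt (fun t => ξ (a*t)) (a • deriv ξ (a*t)) t :=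
    fun t => HasDerivAt.scomp t ((hξd (a*t)).hasDerivAt) (mul_t t)
  have hu' : ∀ t, HasDerivAt (fun t => deriv ξ (a*t)) (a • deriv (deriv ξ) (a*t)) t :=
    fun t => HasDerivAt.scomp t ((hξ'd (a*t)).hasDerivAt) (mul_t t)
  set f : ℝ → ℂ := fun t => ξ (a*t) * g t with hfdef
  have hf1 : ∀ t, HasDerivAt f ((a • deriv ξ (a*t)) * g t + ξ (a*t) * deriv g t) t :=
    fun t => (hu t).mul ((hgd t).hasDerivAt)
  have hderiv_f : deriv f = fun t => (a • deriv ξ (a*t)) * g t + ξ (a*t) * deriv g t :=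
    funext fun t => (hf1 t).deriv
  set D : ℝ → ℂ := fun t =>
    ((a • (a • deriv (deriv ξ) (a*t))) * g t + (a • deriv ξ (a*t)) * deriv g t)
      + ((a • deriv ξ (a*t)) * deriv g t + ξ (a*t) * deriv (deriv g) t) with hDdef
  have hf2 : ∀ t, HasDerivAt (deriv f) (D t) t := by
    intro t
    rw [hderiv_f]
    have A1 : HasDerivAt (fun t => (a • deriv ξ (a*t)) * g t)
        ((a • (a • deriv (deriv ξ) (a*t))) * g t + (a • deriv ξ (a*t)) * deriv g t) t :=
      ((hu' t).const_smul a).mul ((hgd t).hasDerivAt)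
    have A2 : HasDerivAt (fun t => ξ (a*t) * deriv g t)
        ((a • deriv ξ (a*t)) * deriv g t + ξ (a*t) * deriv (deriv g) t) t :=
      (hu t).mul ((hg'd t).hasDerivAt)
    exact A1.add A2
  have hitd : ∀ t, iteratedDeriv 2 f t = D t := by
    intro t; rw [iteratedDeriv_two]; exact (hf2 t).deriv
  have hDt : ∀ t, ‖D t‖ ≤ A^2*C2*‖g t‖ + 2*A*C1*‖deriv g t‖ + C0*‖deriv (deriv g) t‖ := by
    intro t
    have n1 : ‖(a • (a • deriv (deriv ξ) (a*t))) * g t‖ ≤ A^2*C2*‖g t‖ := by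
      rw [norm_mul, norm_smul, norm_smul, Real.norm_eq_abs, abs_of_nonneg ha]
      have h := hb2 (a*t)
      calc a*(a*‖deriv (deriv ξ) (a*t)‖)*‖g t‖ ≤ A*(A*C2)*‖g t‖ := by gcongr
        _ = A^2*C2*‖g t‖ := by ring
    have n2 : ‖(a • deriv ξ (a*t)) * deriv g t‖ ≤ A*C1*‖deriv g t‖ := by
      rw [norm_mul, norm_smul, Real.norm_eq_abs, abs_of_nonneg ha]
      have h := hb1 (a*t)
      gcongr
    have n3 : ‖ξ (a*t) * deriv (deriv g) t‖ ≤ C0*‖deriv (deriv g) t‖ := by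
      rw [norm_mul]
      have h := hb0 (a*t)
      gcongr
    calc ‖D t‖ ≤ ‖(a • (a • deriv (deriv ξ) (a*t))) * g t + (a • deriv ξ (a*t)) * deriv g t‖
          + ‖(a • deriv ξ (a*t)) * deriv g t + ξ (a*t) * deriv (deriv g) t‖ := norm_add_le _ _
      _ ≤ (‖(a • (a • deriv (deriv ξ) (a*t))) * g t‖ + ‖(a • deriv ξ (a*t)) * deriv g t‖)
          + (‖(a • deriv ξ (a*t)) * deriv g t‖ + ‖ξ (a*t) * deriv (deriv g) t‖) :=
        add_le_add (norm_add_le _ _) (norm_add_le _ _)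
      _ ≤ (A^2*C2*‖g t‖ + A*C1*‖deriv g t‖) + (A*C1*‖deriv g t‖ + C0*‖deriv (deriv g) t‖) := by
        gcongr
      _ = A^2*C2*‖g t‖ + 2*A*C1*‖deriv g t‖ + C0*‖deriv (deriv g) t‖ := by ring
  -- integrability facts
  have hfc : ContDiff ℝ 2 f := (hξ.comp ((contDiff_const (c := a)).mul contDiff_id)).mul hg
  have hfs : HasCompactSupport f := hgs.mul_left
  have hif2 : Integrable (fun t => ‖iteratedDeriv 2 f t‖) :=
    (integrable_iteratedDeriv f hfc hfs 2 le_rfl).norm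
  have hig0 : Integrable (fun t => ‖g t‖) :=
    ((hg.continuous).integrable_of_hasCompactSupport hgs).norm
  have hig1 : Integrable (fun t => ‖deriv g t‖) :=
    ((hg.continuous_deriv one_le_two).integrable_of_hasCompactSupport hgs.deriv).norm
  have hig2 : Integrable (fun t => ‖deriv (deriv g) t‖) :=
    ((hg'.continuous_deriv le_rfl).integrable_of_hasCompactSupport hgs.deriv.deriv).norm
  calc ∫ t, ‖iteratedDeriv 2 f t‖
      ≤ ∫ t, (A^2*C2*‖g t‖ + 2*A*C1*‖deriv g t‖ + C0*‖deriv (deriv g) t‖) := by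
        refine integral_mono hif2 ?_ fun t => by rw [hitd t]; exact hDt t
        exact ((hig0.const_mul _).add (hig1.const_mul _)).add (hig2.const_mul _)
    _ = A^2*C2*(∫ t, ‖g t‖) + 2*A*C1*(∫ t, ‖deriv g t‖) + C0*(∫ t, ‖deriv (deriv g) t‖) := by
        have I0 : Integrable (fun t => A^2*C2*‖g t‖) := hig0.const_mul _
        have I1 : Integrable (fun t => 2*A*C1*‖deriv g t‖) := hig1.const_mul _
        have I2 : Integrable (fun t => C0*‖deriv (deriv g) t‖) := hig2.const_mul _
        have I01 : Integrable (fun t => A^2*C2*‖g t‖ + 2*A*C1*‖deriv g t‖) := I0.add I1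
        rw [integral_add I01 I2, integral_add I0 I1,
          MeasureTheory.integral_const_mul, MeasureTheory.integral_const_mul, MeasureTheory.integral_const_mul]
lemma continuous_coeffP (ξ η : ℝ → ℂ) (hξ : CcTwo ξ) (hη : CcTwo η) :
    Continuous fun p : ℝ × ℝ => coeffP ξ η p.1 p.2 := by
  obtain ⟨C, hC0, hC⟩ := exists_norm_bound ξ hξ.1.continuous hξ.2.1
  obtain ⟨hg2, hgs, -⟩ := ccTwo_g hη
  simp only [coeffP]
  apply continuous_of_dominated (bound := fun t => C * ‖starRingEnd ℂ (η t) * (t:ℂ)⁻¹‖)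
  · intro p
    apply Measurable.aestronglyMeasurable
    apply Measurable.mul
    apply Measurable.mul
    apply Measurable.mul
    · exact (Complex.measurable_exp.comp
        (((Complex.measurable_ofReal.comp (measurable_const.mul measurable_id)).neg).mul
          measurable_const))
    · exact hξ.1.continuous.measurable.comp (measurable_const.mul measurable_id)
    · exact (Complex.continuous_conj.comp hη.1.continuous).measurable
    · exact (Complex.measurable_ofReal.comp measurable_id).inv
  · intro p
    filter_upwards with t
    rw [show ‖Complex.exp (-(((2*Real.pi*p.1*t:ℝ)):ℂ) * Complex.I) * ξ (p.2*t)
        * starRingEnd ℂ (η t) * (t:ℂ)⁻¹‖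
      = ‖Complex.exp (-(((2*Real.pi*p.1*t:ℝ)):ℂ) * Complex.I)‖ * ‖ξ (p.2*t)‖
        * ‖starRingEnd ℂ (η t) * (t:ℂ)⁻¹‖ by rw [← norm_mul, ← norm_mul, mul_assoc]]
    rw [show (-(((2*Real.pi*p.1*t:ℝ)):ℂ) * Complex.I)
        = ((-(2*Real.pi*p.1*t):ℝ):ℂ) * Complex.I by push_cast; ring,
      Complex.norm_exp_ofReal_mul_I, one_mul]
    exact mul_le_mul_of_nonneg_right (hC _) (norm_nonneg _)
  · exact (((hg2.continuous.integrable_of_hasCompactSupport hgs).norm).const_mul C).restrict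
  · filter_upwards with t
    have h1 : Continuous fun p : ℝ × ℝ =>
        Complex.exp (-(((2*Real.pi*p.1*t:ℝ)):ℂ) * Complex.I) := by
      apply Complex.continuous_exp.comp
      exact ((Complex.continuous_ofReal.comp
        ((continuous_const.mul continuous_fst).mul continuous_const)).neg).mul continuous_const
    exact ((h1.mul (hξ.1.continuous.comp (continuous_snd.mul continuous_const))).mul
      continuous_const).mul continuous_const
lemma integrable_of_bounds (F : ℝ × ℝ → ℂ) (hF : Continuous F)
    (C₀ C₂ δ M : ℝ) (hδ : 0 < δ) (hC₀ : 0 ≤ C₀) (hC₂ : 0 ≤ C₂)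
    (hvan : ∀ b a : ℝ, 0 < a → a ∉ Icc δ M → F (b, a) = 0)
    (h0 : ∀ b a : ℝ, 0 < a → a ∈ Icc δ M → ‖F (b, a)‖ ≤ C₀)
    (h2 : ∀ b a : ℝ, 0 < a → a ∈ Icc δ M → b ≠ 0 → ‖F (b, a)‖ ≤ C₂ / (2*Real.pi*b)^2) :
    Integrable F muG := by
  set K : ℝ := 2 * max C₀ (C₂ / (2*Real.pi)^2) with hK
  have hK0 : 0 ≤ K := by positivity
  set G : ℝ × ℝ → ℝ :=
    fun p => (K * (1 + p.1^2)⁻¹) * (Icc δ M).indicator (fun _ => 1) p.2 with hG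
  have hbound : ∀ b a : ℝ, 0 < a → ‖F (b, a)‖ ≤ G (b, a) := by
    intro b a ha
    by_cases hmem : a ∈ Icc δ M
    · have hind : (Icc δ M).indicator (fun _ => (1:ℝ)) a = 1 := indicator_of_mem hmem _
      simp only [hG, hind, mul_one]
      have h2' : (0:ℝ) < 1 + b^2 := by positivity
      rcases le_or_gt (b^2) 1 with hb | hb
      · have h1 : (1+b^2) ≤ 2 := by linarith
        have h3 : (2:ℝ)⁻¹ ≤ (1+b^2)⁻¹ := by
          apply inv_anti₀ h2' h1
        calc ‖F (b,a)‖ ≤ C₀ := h0 b a ha hmem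
          _ ≤ max C₀ (C₂ / (2*Real.pi)^2) := le_max_left _ _
          _ = K * 2⁻¹ := by rw [hK]; ring
          _ ≤ K * (1+b^2)⁻¹ := by gcongr
      · have hbne : b ≠ 0 := by
          intro h; rw [h] at hb; norm_num at hb
        have hb0 : (0:ℝ) < b^2 := by positivity
        have h1 : (1+b^2) ≤ 2*b^2 := by linarith
        have h3 : (2*b^2)⁻¹ ≤ (1+b^2)⁻¹ := inv_anti₀ h2' h1
        calc ‖F (b,a)‖ ≤ C₂ / (2*Real.pi*b)^2 := h2 b a ha hmem hbne
          _ = (C₂/(2*Real.pi)^2) * (b^2)⁻¹ := by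
            rw [mul_pow]; ring
          _ = (2 * (C₂/(2*Real.pi)^2)) * (2*b^2)⁻¹ := by
            rw [mul_inv]; ring
          _ ≤ K * (2*b^2)⁻¹ := by
            rw [hK]; gcongr; exact le_max_right _ _
          _ ≤ K * (1+b^2)⁻¹ := by gcongr
    · have hz := hvan b a ha hmem
      simp [hG, hz, indicator_of_notMem hmem]
  have hν : ∀ᵐ p : ℝ×ℝ ∂((volume : Measure ℝ).prod ((volume : Measure ℝ).restrict (Ioi 0))),
      p.2 ∈ Ioi (0:ℝ) := by
    rw [ae_iff]
    have hset : {p : ℝ×ℝ | ¬ p.2 ∈ Ioi (0:ℝ)} = (univ : Set ℝ) ×ˢ ((Ioi (0:ℝ))ᶜ) := by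
      ext p; simp [Set.mem_prod]
    rw [hset, Measure.prod_prod, Measure.restrict_apply measurableSet_Ioi.compl]
    rw [show (Ioi (0:ℝ))ᶜ ∩ Ioi 0 = ∅ by
      ext x
      simp only [mem_inter_iff, mem_compl_iff, mem_Ioi, mem_empty_iff_false, iff_false, not_and]
      exact fun h h' => h h']
    simp
  have habs : muG ≪ ((volume : Measure ℝ).prod ((volume : Measure ℝ).restrict (Ioi 0))) := by
    rw [muG]; exact withDensity_absolutelyContinuous _ _
  have hGint : Integrable G muG := by
    rw [muG, integrable_withDensity_iff]
    · have heq : (fun p : ℝ×ℝ => G p * (ENNReal.ofReal ((p.2^2)⁻¹)).toReal)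
          = fun p : ℝ×ℝ => (K * (1+p.1^2)⁻¹) * ((Icc δ M).indicator (fun a => (a^2)⁻¹) p.2) := by
        funext p
        rw [ENNReal.toReal_ofReal (by positivity)]
        by_cases h : p.2 ∈ Icc δ M
        · simp only [hG, indicator_of_mem h]; ring
        · simp [hG, indicator_of_notMem h]
      rw [heq]
      refine Integrable.mul_prod (f := fun b : ℝ => K * (1+b^2)⁻¹)
        (g := fun a : ℝ => (Icc δ M).indicator (fun a => (a^2)⁻¹) a)
        (integrable_inv_one_add_sq.const_mul K) ?_
      apply Integrable.restrict
      rw [integrable_indicator_iff measurableSet_Icc]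
      apply ContinuousOn.integrableOn_compact isCompact_Icc
      apply ContinuousOn.inv₀ ((continuous_pow 2).continuousOn)
      intro x hx
      have : (0:ℝ) < x := hδ.trans_le hx.1
      positivity
    · exact ((measurable_snd.pow_const 2).inv).ennreal_ofReal
    · exact Filter.Eventually.of_forall fun p => ENNReal.ofReal_lt_top
  refine Integrable.mono' hGint hF.aestronglyMeasurable ?_
  filter_upwards [Filter.Eventually.filter_mono habs.ae_le hν] with p hp
  simpa using hbound p.1 p.2 hp
lemma coeffP_vanish (ξ η : ℝ → ℂ) (εξ Rξ εη Rη : ℝ)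
    (hεξ : 0 < εξ) (hεη : 0 < εη) (hηR : εη ≤ Rη)
    (hsξ : tsupport ξ ⊆ Icc εξ Rξ) (hsη : tsupport η ⊆ Icc εη Rη)
    (b a : ℝ) (ha : 0 < a) (hnot : a ∉ Icc (εξ/Rη) (Rξ/εη)) :
    coeffP ξ η b a = 0 := by
  have hRη : 0 < Rη := hεη.trans_le hηR
  have hzero : ∀ t ∈ Ioi (0:ℝ),
      Complex.exp (-(2 * Real.pi * b * t : ℝ) * Complex.I) * ξ (a * t)
        * starRingEnd ℂ (η t) * (t : ℂ)⁻¹ = (fun _ : ℝ => (0:ℂ)) t := by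
    intro t _
    by_cases htm : t ∈ tsupport η
    · have h1 : εη ≤ t := (hsη htm).1
      have h2 : t ≤ Rη := (hsη htm).2
      have hx : ξ (a*t) = 0 := by
        apply image_eq_zero_of_notMem_tsupport
        intro hmem
        simp only [mem_Icc, not_and_or, not_le] at hnot
        rcases hnot with h | h
        · have k1 : a*t ≤ a*Rη := mul_le_mul_of_nonneg_left h2 ha.le
          have k2 : a*Rη < εξ := (lt_div_iff₀ hRη).1 h
          have k3 : εξ ≤ a*t := (hsξ hmem).1
          linarith
        · have k1 : a*εη ≤ a*t := mul_le_mul_of_nonneg_left h1 ha.le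
          have k2 : Rξ < a*εη := (div_lt_iff₀ hεη).1 h
          have k3 : a*t ≤ Rξ := (hsξ hmem).2
          linarith
      simp [hx]
    · have hη0 : η t = 0 := image_eq_zero_of_notMem_tsupport htm
      simp [hη0]
  rw [coeffP, setIntegral_congr_fun measurableSet_Ioi hzero, integral_zero]


/-- **Convenient coefficient functions are integrable** (part of Lemma 4.3 of
Choi–Ghandehari): for `ξ, η ∈ C_c²((0,∞))`, the coefficient functions `ξ *₊ η` and
`ξ *₋ η` are integrable on `ℝ × (0,∞)` with respect to the left Haar measure
`a⁻² db da`. -/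
theorem coefficient_functions_integrable (ξ η : ℝ → ℂ)
    (hξ : CcTwo ξ) (hη : CcTwo η) :
    Integrable (fun p : ℝ × ℝ => coeffP ξ η p.1 p.2) muG ∧
    Integrable (fun p : ℝ × ℝ => coeffM ξ η p.1 p.2) muG := by
  obtain ⟨hg2, hgs, hgsupp⟩ := ccTwo_g hη
  obtain ⟨hξ2, hξs, hξsupp⟩ := hξ
  obtain ⟨C0, hC00, hC0⟩ := exists_norm_bound ξ hξ2.continuous hξs
  have hξ'cd : ContDiff ℝ 1 (deriv ξ) := by
    have h2 : ContDiff ℝ (1+1:ℕ) ξ := by exact_mod_cast hξ2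
    exact (contDiff_succ_iff_deriv.1 h2).2.2
  obtain ⟨C1, hC10, hC1⟩ := exists_norm_bound (deriv ξ) hξ'cd.continuous hξs.deriv
  obtain ⟨C2, hC20, hC2⟩ :=
    exists_norm_bound (deriv (deriv ξ)) (hξ'cd.continuous_deriv le_rfl) hξs.deriv.deriv
  obtain ⟨εξ, Rξ, hεξ, hξR, hsξ⟩ := support_in_Icc ξ hξs hξsupp
  obtain ⟨εη, Rη, hεη, hηR, hsη⟩ := support_in_Icc η hη.2.1 hη.2.2
  have hRη : 0 < Rη := hεη.trans_le hηR
  have hRξ : 0 < Rξ := hεξ.trans_le hξR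
  set δ : ℝ := εξ/Rη with hδdef
  set M : ℝ := Rξ/εη with hMdef
  have hδ : 0 < δ := by positivity
  have hM : 0 < M := by positivity
  set g : ℝ → ℂ := fun t : ℝ => starRingEnd ℂ (η t) * (t:ℂ)⁻¹ with hgdef
  have hig0 : Integrable (fun t => ‖g t‖) :=
    ((hg2.continuous.integrable_of_hasCompactSupport hgs).norm)
  have hg'cd : ContDiff ℝ 1 (deriv g) := by
    have h2 : ContDiff ℝ (1+1:ℕ) g := by exact_mod_cast hg2
    exact (contDiff_succ_iff_deriv.1 h2).2.2
  set C₀ : ℝ := C0 * ∫ t, ‖g t‖ with hC₀def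
  set C₂ : ℝ := M^2 * C2 * (∫ t, ‖g t‖) + 2*M*C1 * (∫ t, ‖deriv g t‖)
      + C0 * (∫ t, ‖deriv (deriv g) t‖) with hC₂def
  have hint0 : 0 ≤ ∫ t, ‖g t‖ := integral_nonneg fun t => norm_nonneg _
  have hint1 : 0 ≤ ∫ t, ‖deriv g t‖ := integral_nonneg fun t => norm_nonneg _
  have hint2 : 0 ≤ ∫ t, ‖deriv (deriv g) t‖ := integral_nonneg fun t => norm_nonneg _
  have hC₀0 : 0 ≤ C₀ := mul_nonneg hC00 hint0
  have hC₂0 : 0 ≤ C₂ := by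
    apply add_nonneg (add_nonneg _ _) _ <;> positivity
  -- per-a function facts
  have hfa2 : ∀ a : ℝ, ContDiff ℝ 2 (fun t => ξ (a*t) * g t) := fun a =>
    (hξ2.comp ((contDiff_const (c := a)).mul contDiff_id)).mul hg2
  have hfas : ∀ a : ℝ, HasCompactSupport (fun t => ξ (a*t) * g t) := fun a => hgs.mul_left
  -- bounds
  have key0 : ∀ b a : ℝ, 0 < a → a ∈ Icc δ M → ‖coeffP ξ η b a‖ ≤ C₀ := by
    intro b a _ _
    rw [coeffP_eq_fourier ξ η hη.2.2 b a]
    refine (norm_fourier_le _ _).trans ?_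
    have hfa_int : Integrable (fun t => ‖ξ (a*t) * g t‖) :=
      ((hfa2 a).continuous.integrable_of_hasCompactSupport (hfas a)).norm
    calc ∫ t, ‖ξ (a*t) * g t‖ ≤ ∫ t, C0 * ‖g t‖ := by
          refine integral_mono hfa_int (hig0.const_mul C0) fun t => ?_
          rw [norm_mul]
          exact mul_le_mul_of_nonneg_right (hC0 _) (norm_nonneg _)
      _ = C₀ := integral_const_mul _ _
  have key2 : ∀ b a : ℝ, 0 < a → a ∈ Icc δ M → b ≠ 0 →
      ‖coeffP ξ η b a‖ ≤ C₂ / (2*Real.pi*b)^2 := by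
    intro b a ha hmem hb
    rw [coeffP_eq_fourier ξ η hη.2.2 b a]
    refine (fourier_decay _ (hfa2 a) (hfas a) b hb).trans ?_
    have hnum := deriv_bound_aux ξ g hξ2 hg2 hgs C0 C1 C2 hC0 hC1 hC2 hC00 hC10 hC20
      a M ha.le hmem.2
    gcongr
  have hvan : ∀ b a : ℝ, 0 < a → a ∉ Icc δ M → coeffP ξ η b a = 0 := fun b a ha hnot =>
    coeffP_vanish ξ η εξ Rξ εη Rη hεξ hεη hηR hsξ hsη b a ha hnot
  have hcont : Continuous fun p : ℝ × ℝ => coeffP ξ η p.1 p.2 :=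
    continuous_coeffP ξ η ⟨hξ2, hξs, hξsupp⟩ hη
  constructor
  · exact integrable_of_bounds _ hcont C₀ C₂ δ M hδ hC₀0 hC₂0 hvan key0 key2
  · have hMeq : (fun p : ℝ×ℝ => coeffM ξ η p.1 p.2) = fun p : ℝ×ℝ => coeffP ξ η (-p.1) p.2 :=
      funext fun p => coeffM_eq ξ η p.1 p.2
    rw [hMeq]
    apply integrable_of_bounds _ (hcont.comp ((continuous_fst.neg).prodMk continuous_snd))
      C₀ C₂ δ M hδ hC₀0 hC₂0
    · exact fun b a ha hnot => hvan (-b) a ha hnot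
    · exact fun b a ha hmem => key0 (-b) a ha hmem
    · intro b a ha hmem hb
      have := key2 (-b) a ha hmem (neg_ne_zero.2 hb)
      rwa [show (2*Real.pi*(-b))^2 = (2*Real.pi*b)^2 by ring] at this
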